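/- Concatenation of Vector-Encodings (Lemma 2.5): Let D = 2^d, N = 2^n, 0 ≤ ε < 1, and for each j ∈ {0,…,D−1} let α_j ≥ 1, let |ψ_j⟩ ∈ ℂ^{2^n} be ℓ2-normalized, and let V_j be a unitary on ℂ^{2^{a+d+n}} such that (⟨0|_a ⊗ I_{d+n})V_j|0⟩_{a+d+n} = (1/α_j) |j⟩_d ⊗ (|ψ_j⟩ − |E_j⟩) for some vector |E_j⟩ ∈ ℂ^{2^n} with ‖|E_j⟩‖₂ ≤ ε (so V_j is an (α_j, a, ε)-VE for |j⟩_d ⊗ |ψ_j⟩ whose encoded vector is exactly supported on the j-th block). Define |Ψ⟩ := Σ_{j=0}^{D−1} |j⟩_d ⊗ |ψ_j⟩/α_j, 𝒩 := ‖|Ψ⟩‖₂ = √(Σ_j 1/α_j²), S := Σ_{j=0}^{D−1} |j⟩⟨j|_d ⊗ V_j, and Ĥ := H^{⊗d} ⊗ I_{a+d+n} where H is the 2×2 Hadamard matrix. Then Ĥ S Ĥ is a (D/𝒩, d+a, ε)-VE for |Ψ⟩/𝒩. -/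

import Mathlib

open scoped Kronecker Matrix

noncomputable section

/-- Reinterpret a plain function as an element of `EuclideanSpace`. -/
def toEuc {𝕜 : Type*} [RCLike 𝕜] {ι : Type*} (v : ι → 𝕜) : EuclideanSpace 𝕜 ι := WithLp.toLp 2 v

/-- The vector encoded in the first block of the first column of `U`:
`(⟨0| ⊗ I) U |0⟩`. -/
def encVec {I N : Type*} [Zero I] [Zero N] (U : Matrix (I × N) (I × N) ℂ) :
    EuclideanSpace ℂ N := toEuc fun i => U (0, i) (0, 0)

/-- `U` is an `(α, ·, ε)`-vector-encoding of `ψ`. -/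
def IsVE {I N : Type*} [Fintype I] [DecidableEq I] [Zero I] [Fintype N] [DecidableEq N] [Zero N]
    (U : Matrix (I × N) (I × N) ℂ) (α ε : ℝ) (ψ : EuclideanSpace ℂ N) : Prop :=
  U ∈ Matrix.unitaryGroup (I × N) ℂ ∧ ‖ψ - (α : ℂ) • encVec U‖ ≤ ε

/-- The `d`-fold tensor power `H^{⊗d}` of the Hadamard matrix, with entries
`2^{-d/2} (-1)^{⟨j,k⟩}` where `⟨j,k⟩` is the bitwise inner product of `j` and `k`. -/
def Hpow (d : ℕ) : Matrix (Fin (2^d)) (Fin (2^d)) ℂ :=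
  Matrix.of fun j k => (((Real.sqrt 2 ^ d)⁻¹ : ℝ) : ℂ) *
    (-1 : ℂ) ^ (∑ i ∈ Finset.range d, ((j : ℕ).testBit i).toNat * ((k : ℕ).testBit i).toNat)


lemma bit_eq_iff (d : ℕ) (j k : Fin (2^d)) :
    (∀ i : Fin d, (j:ℕ).testBit i = (k:ℕ).testBit i) ↔ j = k := by
  constructor
  · intro h
    apply Fin.ext
    apply Nat.eq_of_testBit_eq
    intro i
    by_cases hi : i < d
    · exact h ⟨i, hi⟩
    · rw [Nat.testBit_eq_false_of_lt, Nat.testBit_eq_false_of_lt]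
      · exact lt_of_lt_of_le k.isLt (Nat.pow_le_pow_right (by norm_num) (le_of_not_gt hi))
      · exact lt_of_lt_of_le j.isLt (Nat.pow_le_pow_right (by norm_num) (le_of_not_gt hi))
  · rintro rfl _; rfl

lemma hadamard_sum (d : ℕ) (j k : Fin (2^d)) :
    ∑ m : Fin (2^d), (-1:ℂ) ^ (∑ i ∈ Finset.range d, ((j:ℕ).testBit i).toNat * ((m:ℕ).testBit i).toNat
        + ∑ i ∈ Finset.range d, ((k:ℕ).testBit i).toNat * ((m:ℕ).testBit i).toNat)
      = if j = k then (2^d : ℂ) else 0 := by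
  have key : ∀ m : Fin (2^d),
      (-1:ℂ) ^ (∑ i ∈ Finset.range d, ((j:ℕ).testBit i).toNat * ((m:ℕ).testBit i).toNat
        + ∑ i ∈ Finset.range d, ((k:ℕ).testBit i).toNat * ((m:ℕ).testBit i).toNat)
      = ∏ i : Fin d, (-1:ℂ) ^ ((((j:ℕ).testBit i).toNat + ((k:ℕ).testBit i).toNat) * ((m:ℕ).testBit i).toNat) := by
    intro m
    rw [Finset.prod_pow_eq_pow_sum]
    congr 1
    rw [← Finset.sum_add_distrib, Fin.sum_univ_eq_sum_range
      (fun i => (((j:ℕ).testBit i).toNat + ((k:ℕ).testBit i).toNat) * ((m:ℕ).testBit i).toNat)]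
    apply Finset.sum_congr rfl
    intro i _
    ring
  simp_rw [key]
  rw [← Equiv.sum_comp (finFunctionFinEquiv (m := 2) (n := d))]
  have hbit : ∀ (g : Fin d → Fin 2) (i : Fin d),
      (((finFunctionFinEquiv g : Fin (2^d)) : ℕ).testBit i).toNat = (g i : ℕ) := by
    intro g i
    have h1 : ((finFunctionFinEquiv g : Fin (2^d)) : ℕ) / 2 ^ (i:ℕ) % 2 = (g i : ℕ) := by
      have := finFunctionFinEquiv_symm_apply_val (finFunctionFinEquiv g) i
      rw [Equiv.symm_apply_apply] at this
      exact this.symm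
    rw [Nat.testBit_eq_decide_div_mod_eq, h1]
    have := (g i).isLt
    interval_cases h : (g i : ℕ) <;> simp
  have step : ∀ g : Fin d → Fin 2,
      (∏ i : Fin d, (-1:ℂ) ^ ((((j:ℕ).testBit i).toNat + ((k:ℕ).testBit i).toNat)
          * (((finFunctionFinEquiv g : Fin (2^d)) : ℕ).testBit i).toNat))
      = ∏ i : Fin d, (-1:ℂ) ^ ((((j:ℕ).testBit i).toNat + ((k:ℕ).testBit i).toNat) * (g i : ℕ)) := by
    intro g; exact Finset.prod_congr rfl fun i _ => by rw [hbit]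
  simp_rw [step]
  rw [← Fintype.piFinset_univ,
    ← Finset.prod_univ_sum (fun _ : Fin d => (Finset.univ : Finset (Fin 2)))
      (fun i x => (-1:ℂ) ^ ((((j:ℕ).testBit i).toNat + ((k:ℕ).testBit i).toNat) * (x:ℕ)))]
  have factor : ∀ i : Fin d,
      (∑ x : Fin 2, (-1:ℂ) ^ ((((j:ℕ).testBit i).toNat + ((k:ℕ).testBit i).toNat) * (x:ℕ)))
      = if (j:ℕ).testBit i = (k:ℕ).testBit i then 2 else 0 := by
    intro i
    rw [Fin.sum_univ_two]
    simp only [Fin.val_zero, Fin.val_one, Nat.mul_zero, Nat.mul_one, pow_zero]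
    cases hj : (j:ℕ).testBit i <;> cases hk : (k:ℕ).testBit i <;> norm_num
  simp_rw [factor]
  by_cases h : ∀ i : Fin d, (j:ℕ).testBit i = (k:ℕ).testBit i
  · rw [if_pos ((bit_eq_iff d j k).mp h)]
    rw [Finset.prod_congr rfl (fun i _ => if_pos (h i)), Finset.prod_const]
    simp
  · rw [if_neg (fun e => h ((bit_eq_iff d j k).mpr e))]
    obtain ⟨i, hi⟩ := not_forall.mp h
    exact Finset.prod_eq_zero (Finset.mem_univ i) (if_neg hi)


lemma csq (d : ℕ) : ((((Real.sqrt 2 ^ d)⁻¹ : ℝ)) : ℂ) * ((((Real.sqrt 2 ^ d)⁻¹ : ℝ)) : ℂ)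
    = (((2:ℝ)^d)⁻¹ : ℝ) := by
  have h : ((Real.sqrt 2 ^ d)⁻¹ : ℝ) * ((Real.sqrt 2 ^ d)⁻¹ : ℝ) = (((2:ℝ)^d)⁻¹ : ℝ) := by
    rw [← mul_inv, ← mul_pow, Real.mul_self_sqrt (by norm_num)]
  exact_mod_cast congrArg (fun x : ℝ => (x : ℂ)) h

lemma Hpow_symm (d : ℕ) (j k : Fin (2^d)) : Hpow d j k = Hpow d k j := by
  simp only [Hpow, Matrix.of_apply]
  congr 2
  exact Finset.sum_congr rfl fun i _ => mul_comm _ _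

lemma Hpow_mem (d : ℕ) : Hpow d ∈ Matrix.unitaryGroup (Fin (2^d)) ℂ := by
  rw [Matrix.mem_unitaryGroup_iff]
  ext j k
  show (∑ m, Hpow d j m * star (Hpow d) m k) = _
  have hstar : ∀ m, star (Hpow d) m k = Hpow d k m := by
    intro m
    show (Hpow d)ᴴ m k = _
    rw [Matrix.conjTranspose_apply]
    simp only [Hpow, Matrix.of_apply, Complex.star_def, map_mul, Complex.conj_ofReal, map_pow,
      map_neg, map_one]
  simp_rw [hstar]
  have : ∀ m, Hpow d j m * Hpow d k m
      = (((2:ℝ)^d)⁻¹ : ℝ) * (-1:ℂ) ^ (∑ i ∈ Finset.range d, ((j:ℕ).testBit i).toNat * ((m:ℕ).testBit i).toNat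
        + ∑ i ∈ Finset.range d, ((k:ℕ).testBit i).toNat * ((m:ℕ).testBit i).toNat) := by
    intro m
    simp only [Hpow, Matrix.of_apply]
    rw [pow_add, ← csq d]
    ring
  simp_rw [this, ← Finset.mul_sum, hadamard_sum d j k]
  rw [Matrix.one_apply]
  by_cases h : j = k <;> simp [h]


lemma reindex_mem_unitaryGroup {m n : Type*} [Fintype m] [DecidableEq m] [Fintype n]
    [DecidableEq n] (e : m ≃ n) {M : Matrix m m ℂ} (hM : M ∈ Matrix.unitaryGroup m ℂ) :
    Matrix.reindex e e M ∈ Matrix.unitaryGroup n ℂ := by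
  rw [Matrix.mem_unitaryGroup_iff] at hM ⊢
  rw [Matrix.star_eq_conjTranspose, Matrix.conjTranspose_reindex, Matrix.reindex_apply,
    Matrix.reindex_apply, Matrix.submatrix_mul_equiv, ← Matrix.star_eq_conjTranspose, hM,
    Matrix.submatrix_one_equiv]

/-- **Concatenation of vector-encodings** (Lemma 2.5).
Given unitaries `V j` whose encoded vector is exactly `(1/α_j)|j⟩ ⊗ (ψ_j − E_j)` with
`‖E_j‖ ≤ ε`, the circuit `Ĥ S Ĥ` with `S = Σ_j |j⟩⟨j| ⊗ V_j` and `Ĥ = H^{⊗d} ⊗ I`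
(with the control and ancilla registers grouped in front, i.e. reindexed along the
product associator) is a `(2^d/𝒩, d + a, ε)`-VE for `Ψ/𝒩` where
`Ψ = Σ_j |j⟩ ⊗ ψ_j / α_j` and `𝒩 = ‖Ψ‖₂ = √(Σ_j 1/α_j²)`. -/
theorem concatenation_of_vector_encodings
    (d n a : ℕ) (ε : ℝ) (hε0 : 0 ≤ ε) (hε1 : ε < 1)
    (α : Fin (2^d) → ℝ) (hα : ∀ j, 1 ≤ α j)
    (ψ : Fin (2^d) → EuclideanSpace ℂ (Fin (2^n))) (hψn : ∀ j, ‖ψ j‖ = 1)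
    (V : Fin (2^d) → Matrix (Fin (2^a) × (Fin (2^d) × Fin (2^n)))
        (Fin (2^a) × (Fin (2^d) × Fin (2^n))) ℂ)
    (hVunit : ∀ j, V j ∈ Matrix.unitaryGroup (Fin (2^a) × (Fin (2^d) × Fin (2^n))) ℂ)
    (hVenc : ∀ j, ∃ E : EuclideanSpace ℂ (Fin (2^n)), ‖E‖ ≤ ε ∧
        ∀ p : Fin (2^d) × Fin (2^n),
          encVec (V j) p = (1 / (α j : ℂ)) * (if p.1 = j then ψ j p.2 - E p.2 else 0))
    (Ψ : EuclideanSpace ℂ (Fin (2^d) × Fin (2^n)))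
    (hΨ : Ψ = toEuc fun p => ψ p.1 p.2 / (α p.1 : ℂ))
    (𝒩 : ℝ) (h𝒩 : 𝒩 = ‖Ψ‖)
    (S : Matrix (Fin (2^d) × (Fin (2^a) × (Fin (2^d) × Fin (2^n))))
        (Fin (2^d) × (Fin (2^a) × (Fin (2^d) × Fin (2^n)))) ℂ)
    (hS : S = ∑ j : Fin (2^d), Matrix.single j j (1 : ℂ) ⊗ₖ V j)
    (Hh : Matrix (Fin (2^d) × (Fin (2^a) × (Fin (2^d) × Fin (2^n))))
        (Fin (2^d) × (Fin (2^a) × (Fin (2^d) × Fin (2^n)))) ℂ)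
    (hH : Hh = Hpow d ⊗ₖ (1 : Matrix (Fin (2^a) × (Fin (2^d) × Fin (2^n)))
        (Fin (2^a) × (Fin (2^d) × Fin (2^n))) ℂ)) :
    𝒩 = Real.sqrt (∑ j, 1 / (α j) ^ 2) ∧
    IsVE (Matrix.reindex
        (Equiv.prodAssoc (Fin (2^d)) (Fin (2^a)) (Fin (2^d) × Fin (2^n))).symm
        (Equiv.prodAssoc (Fin (2^d)) (Fin (2^a)) (Fin (2^d) × Fin (2^n))).symm
        (Hh * S * Hh))
      ((2^d : ℝ) / 𝒩) ε (𝒩⁻¹ • Ψ) := by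
  classical
  choose E hEnorm hEenc using hVenc
  have hαpos : ∀ j, (0:ℝ) < α j := fun j => lt_of_lt_of_le one_pos (hα j)
  have hψsq : ∀ j, (∑ i, ‖ψ j i‖ ^ 2) = 1 := by
    intro j
    have h := hψn j
    rw [EuclideanSpace.norm_eq] at h
    exact Real.sqrt_eq_one.mp h
  have hNsum : ∑ p : Fin (2^d) × Fin (2^n), ‖Ψ p‖ ^ 2 = ∑ j, 1 / α j ^ 2 := by
    rw [Fintype.sum_prod_type]
    refine Finset.sum_congr rfl fun j _ => ?_
    have hp : ∀ i : Fin (2^n), ‖Ψ (j, i)‖ ^ 2 = ‖ψ j i‖ ^ 2 / α j ^ 2 := by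
      intro i
      rw [hΨ]
      show ‖ψ j i / (α j : ℂ)‖ ^ 2 = _
      rw [norm_div, Complex.norm_real, Real.norm_eq_abs, abs_of_pos (hαpos j), div_pow]
    simp_rw [hp]
    rw [← Finset.sum_div, hψsq j]
  have part1 : 𝒩 = Real.sqrt (∑ j, 1 / α j ^ 2) := by
    rw [h𝒩, EuclideanSpace.norm_eq, hNsum]
  have hsumpos : (0:ℝ) < ∑ j, 1 / α j ^ 2 :=
    Finset.sum_pos (fun j _ => by have := hαpos j; positivity) Finset.univ_nonempty
  have hNpos : 0 < 𝒩 := part1 ▸ Real.sqrt_pos.mpr hsumpos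
  have hNsq : 𝒩 ^ 2 = ∑ j, 1 / α j ^ 2 := by
    rw [part1]; exact Real.sq_sqrt hsumpos.le
  -- entry computations
  have hS_entry : ∀ (k k' : Fin (2^d)) (y y' : Fin (2^a) × (Fin (2^d) × Fin (2^n))),
      S (k, y) (k', y') = if k = k' then V k y y' else 0 := by
    intro k k' y y'
    rw [hS]
    simp only [Matrix.sum_apply, Matrix.kroneckerMap_apply, Matrix.single,
      Matrix.of_apply]
    rw [Finset.sum_eq_single k]
    · by_cases h : k = k' <;> simp [h]
    · intro b _ hb
      simp [hb, Ne.symm hb]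
    · simp
  have hH_entry : ∀ (j k : Fin (2^d)) (x y : Fin (2^a) × (Fin (2^d) × Fin (2^n))),
      Hh (j, x) (k, y) = Hpow d j k * (if x = y then 1 else 0) := by
    intro j k x y
    rw [hH]
    simp only [Matrix.kroneckerMap_apply, Matrix.one_apply]
  have hHS_entry : ∀ (j k : Fin (2^d)) (x y : Fin (2^a) × (Fin (2^d) × Fin (2^n))),
      (Hh * S) (j, x) (k, y) = Hpow d j k * V k x y := by
    intro j k x y
    rw [Matrix.mul_apply, Fintype.sum_prod_type]
    simp_rw [hH_entry, hS_entry]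
    simp [Finset.sum_ite_eq, Finset.sum_ite_eq', mul_ite, ite_mul]
  have hM_entry : ∀ (j j' : Fin (2^d)) (x x' : Fin (2^a) × (Fin (2^d) × Fin (2^n))),
      (Hh * S * Hh) (j, x) (j', x') = ∑ k, Hpow d j k * Hpow d k j' * V k x x' := by
    intro j j' x x'
    rw [Matrix.mul_apply, Fintype.sum_prod_type]
    simp_rw [hHS_entry, hH_entry]
    have : ∀ k : Fin (2^d),
        (∑ y : Fin (2^a) × (Fin (2^d) × Fin (2^n)),
          Hpow d j k * V k x y * (Hpow d k j' * (if y = x' then 1 else 0)))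
        = Hpow d j k * Hpow d k j' * V k x x' := by
      intro k
      rw [Finset.sum_eq_single x']
      · simp; ring
      · intro b _ hb; simp [hb]
      · simp
    simp_rw [this]
  -- unitarity
  have hHu : Hh ∈ Matrix.unitaryGroup _ ℂ := by
    rw [Matrix.mem_unitaryGroup_iff]
    have hsH : star Hh = (star (Hpow d)) ⊗ₖ
        (star (1 : Matrix (Fin (2^a) × (Fin (2^d) × Fin (2^n)))
          (Fin (2^a) × (Fin (2^d) × Fin (2^n))) ℂ)) := by
      ext ⟨k, y⟩ ⟨j, x⟩
      show star (Hh (j, x) (k, y)) = star (Hpow d j k) *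
        star ((1 : Matrix (Fin (2^a) × (Fin (2^d) × Fin (2^n)))
          (Fin (2^a) × (Fin (2^d) × Fin (2^n))) ℂ) x y)
      rw [hH_entry, star_mul', Matrix.one_apply, mul_comm]
    rw [hsH, hH, ← Matrix.mul_kronecker_mul, star_one, mul_one,
      Matrix.mem_unitaryGroup_iff.mp (Hpow_mem d), Matrix.one_kronecker_one]
  have hSu : S ∈ Matrix.unitaryGroup _ ℂ := by
    rw [Matrix.mem_unitaryGroup_iff]
    ext ⟨k, y⟩ ⟨k', y'⟩
    rw [Matrix.mul_apply, Fintype.sum_prod_type]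
    have hstar : ∀ (m : Fin (2^d)) (z : Fin (2^a) × (Fin (2^d) × Fin (2^n))),
        star S (m, z) (k', y') = star (S (k', y') (m, z)) := fun m z => rfl
    simp_rw [hstar, hS_entry]
    by_cases hk : k = k'
    · subst hk
      rw [Finset.sum_eq_single k]
      · have h1 : ∀ z, (if k = k then V k y z else 0) * star (if k = k then V k y' z else 0)
            = V k y z * star (V k y' z) := by intro z; simp
        rw [Finset.sum_congr rfl fun z _ => h1 z]
        have h2 : (∑ z, V k y z * star (V k y' z)) = (V k * star (V k)) y y' := by
          rw [Matrix.mul_apply]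
          rfl
        rw [h2, Matrix.mem_unitaryGroup_iff.mp (hVunit k)]
        by_cases hy : y = y' <;> simp [Matrix.one_apply, hy, Prod.ext_iff]
      · intro b _ hb
        have h3 : ∀ z, (if k = b then V k y z else 0) * star (if k = b then V k y' z else 0)
            = 0 := by intro z; simp [Ne.symm hb]
        exact Finset.sum_eq_zero fun z _ => h3 z
      · simp
    · have : ∀ (m : Fin (2^d)) (z : Fin (2^a) × (Fin (2^d) × Fin (2^n))),
          (if k = m then V k y z else 0) * star (if k' = m then V k' y' z else 0) = 0 := by
        intro m z
        by_cases h1 : k = m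
        · subst h1
          have h3 : ¬ (k' = k) := fun h2 => hk h2.symm
          simp [h3]
        · simp [h1]
      simp only [this, Finset.sum_const_zero]
      simp [Matrix.one_apply, Prod.ext_iff, hk]
  have hUu := reindex_mem_unitaryGroup
    (Equiv.prodAssoc (Fin (2^d)) (Fin (2^a)) (Fin (2^d) × Fin (2^n))).symm
    (mul_mem (mul_mem hHu hSu) hHu)
  -- encoded vector
  have hH0 : ∀ k : Fin (2^d), Hpow d 0 k = (((Real.sqrt 2 ^ d)⁻¹ : ℝ) : ℂ) := by
    intro k
    simp [Hpow]
  have hEnc : ∀ p : Fin (2^d) × Fin (2^n),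
      encVec (Matrix.reindex
        (Equiv.prodAssoc (Fin (2^d)) (Fin (2^a)) (Fin (2^d) × Fin (2^n))).symm
        (Equiv.prodAssoc (Fin (2^d)) (Fin (2^a)) (Fin (2^d) × Fin (2^n))).symm
        (Hh * S * Hh)) p
      = ((((2:ℝ)^d)⁻¹ : ℝ) : ℂ) * ((α p.1 : ℂ))⁻¹ * (ψ p.1 p.2 - E p.1 p.2) := by
    intro p
    show (Matrix.reindex _ _ (Hh * S * Hh)) ((0 : Fin (2^d) × Fin (2^a)), p)
        ((0 : Fin (2^d) × Fin (2^a)), (0 : Fin (2^d) × Fin (2^n))) = _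
    rw [Matrix.reindex_apply, Matrix.submatrix_apply]
    have e1 : (Equiv.prodAssoc (Fin (2^d)) (Fin (2^a)) (Fin (2^d) × Fin (2^n))).symm.symm
        ((0 : Fin (2^d) × Fin (2^a)), p) = ((0 : Fin (2^d)), ((0 : Fin (2^a)), p)) := rfl
    have e2 : (Equiv.prodAssoc (Fin (2^d)) (Fin (2^a)) (Fin (2^d) × Fin (2^n))).symm.symm
        ((0 : Fin (2^d) × Fin (2^a)), (0 : Fin (2^d) × Fin (2^n)))
        = ((0 : Fin (2^d)), ((0 : Fin (2^a)), (0 : Fin (2^d) × Fin (2^n)))) := rfl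
    rw [e1, e2, hM_entry]
    have hV0 : ∀ k : Fin (2^d),
        V k ((0 : Fin (2^a)), p) ((0 : Fin (2^a)), (0 : Fin (2^d) × Fin (2^n)))
        = (1 / (α k : ℂ)) * (if p.1 = k then ψ k p.2 - E k p.2 else 0) := by
      intro k
      have := hEenc k p
      exact this
    have hterm : ∀ k : Fin (2^d),
        Hpow d 0 k * Hpow d k 0 * V k ((0 : Fin (2^a)), p)
          ((0 : Fin (2^a)), (0 : Fin (2^d) × Fin (2^n)))
        = if p.1 = k then ((((2:ℝ)^d)⁻¹ : ℝ) : ℂ) * ((α k : ℂ))⁻¹ * (ψ k p.2 - E k p.2)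
          else 0 := by
      intro k
      rw [Hpow_symm d k 0, hH0 k, hV0 k, csq]
      by_cases h : p.1 = k
      · rw [if_pos h, if_pos h]
        field_simp
      · rw [if_neg h, if_neg h]
        simp
    simp_rw [hterm]
    rw [Finset.sum_ite_eq]
    simp
  -- conclusion
  refine ⟨part1, hUu, ?_⟩
  have hNne : 𝒩 ≠ 0 := hNpos.ne'
  have h2d : ((2:ℝ)^d) ≠ 0 := by positivity
  have hvec : ∀ p : Fin (2^d) × Fin (2^n),
      (𝒩⁻¹ • Ψ - (((2^d / 𝒩 : ℝ)) : ℂ) • (encVec (Matrix.reindex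
        (Equiv.prodAssoc (Fin (2^d)) (Fin (2^a)) (Fin (2^d) × Fin (2^n))).symm
        (Equiv.prodAssoc (Fin (2^d)) (Fin (2^a)) (Fin (2^d) × Fin (2^n))).symm
        (Hh * S * Hh)))) p
      = ((𝒩⁻¹ : ℝ) : ℂ) * ((α p.1 : ℂ))⁻¹ * E p.1 p.2 := by
    intro p
    have hsub : (𝒩⁻¹ • Ψ - (((2^d / 𝒩 : ℝ)) : ℂ) • (encVec (Matrix.reindex
        (Equiv.prodAssoc (Fin (2^d)) (Fin (2^a)) (Fin (2^d) × Fin (2^n))).symm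
        (Equiv.prodAssoc (Fin (2^d)) (Fin (2^a)) (Fin (2^d) × Fin (2^n))).symm
        (Hh * S * Hh)))) p
        = 𝒩⁻¹ • Ψ p - (((2^d / 𝒩 : ℝ)) : ℂ) * (encVec (Matrix.reindex
        (Equiv.prodAssoc (Fin (2^d)) (Fin (2^a)) (Fin (2^d) × Fin (2^n))).symm
        (Equiv.prodAssoc (Fin (2^d)) (Fin (2^a)) (Fin (2^d) × Fin (2^n))).symm
        (Hh * S * Hh))) p := rfl
    rw [hsub, hEnc p, hΨ]
    show (𝒩⁻¹ : ℝ) • (ψ p.1 p.2 / (α p.1 : ℂ)) - _ = _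
    have hαne : ((α p.1 : ℝ) : ℂ) ≠ 0 := by
      exact_mod_cast Complex.ofReal_ne_zero.mpr (hαpos p.1).ne'
    have hNneC : ((𝒩 : ℝ) : ℂ) ≠ 0 := Complex.ofReal_ne_zero.mpr hNne
    have h2dC : (((2:ℝ)^d : ℝ) : ℂ) ≠ 0 := Complex.ofReal_ne_zero.mpr h2d
    rw [Complex.real_smul]
    push_cast
    field_simp
    ring
  rw [show (𝒩⁻¹ • Ψ - (((2^d / 𝒩 : ℝ)) : ℂ) • (encVec (Matrix.reindex
        (Equiv.prodAssoc (Fin (2^d)) (Fin (2^a)) (Fin (2^d) × Fin (2^n))).symm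
        (Equiv.prodAssoc (Fin (2^d)) (Fin (2^a)) (Fin (2^d) × Fin (2^n))).symm
        (Hh * S * Hh)))) = toEuc fun p => ((𝒩⁻¹ : ℝ) : ℂ) * ((α p.1 : ℂ))⁻¹ * E p.1 p.2
    from PiLp.ext hvec]
  have hEsq : ∀ j, (∑ i, ‖E j i‖ ^ 2) ≤ ε ^ 2 := by
    intro j
    have h := hEnorm j
    have h1 : ‖E j‖ ^ 2 ≤ ε ^ 2 := by
      have := norm_nonneg (E j)
      nlinarith
    rw [EuclideanSpace.norm_eq,
      Real.sq_sqrt (Finset.sum_nonneg fun i _ => sq_nonneg ‖E j i‖)] at h1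
    exact h1
  rw [EuclideanSpace.norm_eq]
  have hsum_le : (∑ p : Fin (2^d) × Fin (2^n),
      ‖(toEuc fun p : Fin (2^d) × Fin (2^n) =>
        ((𝒩⁻¹ : ℝ) : ℂ) * ((α p.1 : ℂ))⁻¹ * E p.1 p.2) p‖ ^ 2) ≤ ε ^ 2 := by
    have hterm : ∀ p : Fin (2^d) × Fin (2^n),
        ‖(toEuc fun p : Fin (2^d) × Fin (2^n) =>
          ((𝒩⁻¹ : ℝ) : ℂ) * ((α p.1 : ℂ))⁻¹ * E p.1 p.2) p‖ ^ 2
        = (𝒩⁻¹)^2 * ((α p.1)⁻¹)^2 * ‖E p.1 p.2‖ ^ 2 := by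
      intro p
      show ‖((𝒩⁻¹ : ℝ) : ℂ) * ((α p.1 : ℂ))⁻¹ * E p.1 p.2‖ ^ 2 = _
      rw [norm_mul, norm_mul, norm_inv, Complex.norm_real, Complex.norm_real,
        Real.norm_eq_abs, Real.norm_eq_abs, abs_of_pos (inv_pos.mpr hNpos),
        abs_of_pos (hαpos p.1)]
      ring
    simp_rw [hterm]
    rw [Fintype.sum_prod_type]
    have hj : ∀ j : Fin (2^d), (∑ i : Fin (2^n),
        (𝒩⁻¹)^2 * ((α j)⁻¹)^2 * ‖E j i‖ ^ 2) ≤ (𝒩⁻¹)^2 * ((α j)⁻¹)^2 * ε^2 := by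
      intro j
      rw [← Finset.mul_sum]
      exact mul_le_mul_of_nonneg_left (hEsq j) (by positivity)
    calc (∑ j, ∑ i, (𝒩⁻¹)^2 * ((α j)⁻¹)^2 * ‖E j i‖ ^ 2)
        ≤ ∑ j, (𝒩⁻¹)^2 * ((α j)⁻¹)^2 * ε^2 := Finset.sum_le_sum fun j _ => hj j
      _ = (𝒩⁻¹)^2 * (∑ j, 1 / α j ^ 2) * ε^2 := by
          rw [Finset.sum_congr rfl (fun j _ => by ring : ∀ j ∈ Finset.univ,
            (𝒩⁻¹)^2 * ((α j)⁻¹)^2 * ε^2 = (𝒩⁻¹)^2 * (1 / α j ^ 2) * ε^2)]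
          rw [← Finset.sum_mul, ← Finset.mul_sum]
      _ = ε ^ 2 := by
          rw [← hNsq]
          field_simp
  calc Real.sqrt (∑ p : Fin (2^d) × Fin (2^n),
        ‖(toEuc fun p : Fin (2^d) × Fin (2^n) =>
          ((𝒩⁻¹ : ℝ) : ℂ) * ((α p.1 : ℂ))⁻¹ * E p.1 p.2) p‖ ^ 2)
      ≤ Real.sqrt (ε ^ 2) := Real.sqrt_le_sqrt hsum_le
    _ = ε := by rw [Real.sqrt_sq hε0]
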